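/- For α ∈ F_n, let K⟨X,T,T⁻¹⟩_α be the K-linear span of the monomials m ∈ ⟨X,T,T⁻¹⟩ with sdeg(m) = α. Then: (i) K⟨X,T,T⁻¹⟩ is the internal direct sum of the additive subgroups K⟨X,T,T⁻¹⟩_α, α ∈ F_n; (ii) K⟨X,T,T⁻¹⟩_1 · K⟨X,T,T⁻¹⟩_α ⊆ K⟨X,T,T⁻¹⟩_α for all α ∈ F_n; (iii) sdeg is injective on the submonoid ⟨X⟩ of words in x₁,…,xₙ alone, so each subgroup K⟨X,T,T⁻¹⟩_α contains at most one monomial from ⟨X⟩. Hence these subgroups form a separating F_n-pseudograding for ⟨X⟩. -/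

import Mathlib

open scoped DirectSum
open scoped Pointwise

/-- The alphabet `X ∪ T ∪ T⁻¹` with `n` letters `xᵢ`, `n` letters `tᵢ` and `n` letters
`tᵢ⁻¹`. -/
abbrev XTTn (n : ℕ) := Fin n ⊕ (Fin n ⊕ Fin n)

/-- The monoid homomorphism `λ : ⟨X,T,T⁻¹⟩ → F_n` with `λ(xᵢ) = gᵢ`,
`λ(t_j) = λ(t_j⁻¹) = 1`. -/
def lamHom (n : ℕ) : FreeMonoid (XTTn n) →* FreeGroup (Fin n) :=
  FreeMonoid.lift (Sum.elim (fun i => FreeGroup.of i) fun _ => 1)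

/-- The monoid homomorphism `μ : ⟨X,T,T⁻¹⟩ → F_n` with `μ(xᵢ) = 1`, `μ(t_j) = g_j`,
`μ(t_j⁻¹) = g_j⁻¹`. -/
def muHom (n : ℕ) : FreeMonoid (XTTn n) →* FreeGroup (Fin n) :=
  FreeMonoid.lift (Sum.elim (fun _ => 1)
    (Sum.elim (fun j => FreeGroup.of j) fun j => (FreeGroup.of j)⁻¹))

/-- `sdeg(m) = μ(m)⁻¹ · λ(m) ∈ F_n`. -/
def sdeg (n : ℕ) (m : FreeMonoid (XTTn n)) : FreeGroup (Fin n) :=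
  (muHom n m)⁻¹ * lamHom n m

/-- A word of `⟨X,T,T⁻¹⟩` lies in the submonoid `⟨X⟩` if all its letters are among the
`xᵢ`. -/
def InX (n : ℕ) (m : FreeMonoid (XTTn n)) : Prop :=
  ∀ u ∈ FreeMonoid.toList m, ∃ i : Fin n, u = Sum.inl i

private lemma transfer_internal {ι M K : Type*} [DecidableEq ι] [AddCommGroup M] [Semiring K] [Module K M]
    (S : ι → AddSubgroup M) (T : ι → Submodule K M) (h : ∀ i, (S i : Set M) = T i)
    (hT : DirectSum.IsInternal T) : DirectSum.IsInternal S := by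
  have hmem : ∀ i (x : M), x ∈ S i ↔ x ∈ T i := fun i x => by
    rw [← SetLike.mem_coe, h i, SetLike.mem_coe]
  let e : ∀ i, S i ≃+ T i := fun i =>
    { toFun := fun x => ⟨x, (hmem i x).1 x.2⟩
      invFun := fun x => ⟨x, (hmem i x).2 x.2⟩
      left_inv := fun _ => rfl
      right_inv := fun _ => rfl
      map_add' := fun _ _ => rfl }
  have key : (DirectSum.coeAddMonoidHom T).comp (DFinsupp.mapRange.addEquiv e).toAddMonoidHom =
      DirectSum.coeAddMonoidHom S := by
    refine DirectSum.addHom_ext fun i x => ?_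
    have h1 : (DFinsupp.mapRange.addEquiv e) (DirectSum.of (fun i => S i) i x) =
        DirectSum.of (fun i => T i) i (e i x) := by
      show DFinsupp.mapRange (fun i x => e i x) (fun i => (e i).map_zero)
          (DFinsupp.single i x) = DFinsupp.single i (e i x)
      exact DFinsupp.mapRange_single
    show DirectSum.coeAddMonoidHom T
        ((DFinsupp.mapRange.addEquiv e) (DirectSum.of (fun i => S i) i x)) =
      DirectSum.coeAddMonoidHom S (DirectSum.of (fun i => S i) i x)
    rw [h1, DirectSum.coeAddMonoidHom_of, DirectSum.coeAddMonoidHom_of]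
    rfl
  have : ⇑(DirectSum.coeAddMonoidHom S) =
      ⇑(DirectSum.coeAddMonoidHom T) ∘ ⇑(DFinsupp.mapRange.addEquiv e) := by
    rw [← key]; rfl
  rw [DirectSum.IsInternal, this]
  exact hT.comp (DFinsupp.mapRange.addEquiv e).bijective

private lemma exists_list {n : ℕ} (L : List (XTTn n)) (h : ∀ u ∈ L, ∃ i : Fin n, u = Sum.inl i) :
    ∃ l : List (Fin n), L = l.map Sum.inl := by
  induction L with
  | nil => exact ⟨[], rfl⟩
  | cons a L ih =>
    obtain ⟨i, rfl⟩ := h a List.mem_cons_self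
    obtain ⟨l, rfl⟩ := ih fun u hu => h u (List.mem_cons_of_mem _ hu)
    exact ⟨i :: l, rfl⟩

private lemma reduce_pos {n : ℕ} (l : List (Fin n)) :
    FreeGroup.reduce (l.map fun i => (i, true)) = l.map fun i => (i, true) := by
  induction l with
  | nil => rfl
  | cons i l ih =>
    rw [List.map_cons, FreeGroup.reduce.cons, ih]
    cases l with
    | nil => rfl
    | cons j l' => simp

private lemma prod_of_eq_mk {n : ℕ} (l : List (Fin n)) :
    (l.map (fun i => FreeGroup.of i)).prod = FreeGroup.mk (l.map fun i => (i, true)) := by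
  induction l with
  | nil => simp [FreeGroup.one_eq_mk]
  | cons i l ih =>
    rw [List.map_cons, List.prod_cons, ih, List.map_cons]
    show FreeGroup.mk [(i, true)] * _ = _
    rw [FreeGroup.mul_mk]
    rfl

private lemma mu_inX {n : ℕ} (m : FreeMonoid (XTTn n)) (hm : InX n m) : muHom n m = 1 := by
  rw [muHom, FreeMonoid.lift_apply]
  refine List.prod_eq_one fun x hx => ?_
  obtain ⟨u, hu, rfl⟩ := List.mem_map.mp hx
  obtain ⟨i, rfl⟩ := hm u hu
  rfl

private lemma lam_inX {n : ℕ} (l : List (Fin n)) :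
    lamHom n (FreeMonoid.ofList (l.map Sum.inl)) = FreeGroup.mk (l.map fun i => (i, true)) := by
  rw [lamHom, FreeMonoid.lift_apply, FreeMonoid.toList_ofList, List.map_map,
    ← prod_of_eq_mk]
  rfl

private lemma ma_disjoint_supported_supported {K M : Type*} [Semiring K] {s t : Set M}
    (h : Disjoint s t) :
    Disjoint (MonoidAlgebra.supported K K s) (MonoidAlgebra.supported K K t) := by
  rw [Submodule.disjoint_def]
  intro x hx hy
  have h' := Finsupp.disjoint_supported_supported (M := K) (R := K) h
  rw [Submodule.disjoint_def] at h'
  exact MonoidAlgebra.coeff_eq_zero.mp (h' x.coeff hx hy)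

/-- **The `sdeg`-decomposition is a separating `F_n`-pseudograding for `⟨X⟩`.**
For `α ∈ F_n`, let `S α ⊆ K⟨X,T,T⁻¹⟩` be the `K`-linear span of the monomials `m` with
`sdeg(m) = α` (the free algebra is realized as the monoid algebra of the free monoid
`⟨X,T,T⁻¹⟩`).  Then (i) `K⟨X,T,T⁻¹⟩` is the internal direct sum of the additive subgroups
`S α`; (ii) `S 1 · S α ⊆ S α` for all `α`; (iii) `sdeg` is injective on the submonoid
`⟨X⟩`; hence (iv) each `S α` contains at most one monomial from `⟨X⟩`. -/
theorem sdeg_separating_pseudograding (K : Type*) [Field K] (n : ℕ) (hn : 0 < n)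
    (S : FreeGroup (Fin n) → AddSubgroup (MonoidAlgebra K (FreeMonoid (XTTn n))))
    (hS : ∀ α : FreeGroup (Fin n), (S α : Set (MonoidAlgebra K (FreeMonoid (XTTn n)))) =
      (Submodule.span K ((fun m => MonoidAlgebra.of K (FreeMonoid (XTTn n)) m) ''
        {m : FreeMonoid (XTTn n) | sdeg n m = α}) :
          Set (MonoidAlgebra K (FreeMonoid (XTTn n))))) :
    DirectSum.IsInternal S ∧
      (∀ α : FreeGroup (Fin n), ∀ a ∈ S 1, ∀ b ∈ S α, a * b ∈ S α) ∧
      (∀ m m' : FreeMonoid (XTTn n), InX n m → InX n m' → sdeg n m = sdeg n m' → m = m') ∧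
      (∀ α : FreeGroup (Fin n), ∀ m m' : FreeMonoid (XTTn n), InX n m → InX n m' →
        MonoidAlgebra.of K (FreeMonoid (XTTn n)) m ∈ S α →
        MonoidAlgebra.of K (FreeMonoid (XTTn n)) m' ∈ S α → m = m') := by
  classical
  have hof : (fun m => MonoidAlgebra.of K (FreeMonoid (XTTn n)) m) =
      fun m : FreeMonoid (XTTn n) => MonoidAlgebra.single m (1 : K) :=
    funext fun m => MonoidAlgebra.of_apply K (FreeMonoid (XTTn n)) m
  set T : FreeGroup (Fin n) → Submodule K (MonoidAlgebra K (FreeMonoid (XTTn n))) :=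
    fun α => MonoidAlgebra.supported K K {m : FreeMonoid (XTTn n) | sdeg n m = α} with hTdef
  have hspan : ∀ α, T α = Submodule.span K
      ((fun m => MonoidAlgebra.of K (FreeMonoid (XTTn n)) m) ''
        {m : FreeMonoid (XTTn n) | sdeg n m = α}) := by
    intro α
    rw [hof]
    exact MonoidAlgebra.supported_eq_span_single _ _
  have hST : ∀ α, (S α : Set (MonoidAlgebra K (FreeMonoid (XTTn n)))) = (T α : Set _) := by
    intro α
    rw [hS α, ← hspan α]
  have hSTmem : ∀ α x, x ∈ S α ↔ x ∈ T α := fun α x => by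
    rw [← SetLike.mem_coe, hST α, SetLike.mem_coe]
  have hTmem : ∀ α (x : MonoidAlgebra K (FreeMonoid (XTTn n))),
      x ∈ T α ↔ ∀ m ∈ x.coeff.support, sdeg n m = α := fun α x => by
    have h0 : x ∈ T α ↔ ↑x.coeff.support ⊆ {m : FreeMonoid (XTTn n) | sdeg n m = α} :=
      MonoidAlgebra.mem_supported
    rw [h0]
    exact ⟨fun h m hm => h (Finset.mem_coe.mpr hm), fun h m hm => h m (Finset.mem_coe.mp hm)⟩
  -- (iii)
  have part3 : ∀ m m' : FreeMonoid (XTTn n), InX n m → InX n m' →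
      sdeg n m = sdeg n m' → m = m' := by
    intro m m' hm hm' hsd
    obtain ⟨l, hl⟩ := exists_list (FreeMonoid.toList m) hm
    obtain ⟨l', hl'⟩ := exists_list (FreeMonoid.toList m') hm'
    have hmeq : m = FreeMonoid.ofList (l.map Sum.inl) := by
      rw [← hl, FreeMonoid.ofList_toList]
    have hmeq' : m' = FreeMonoid.ofList (l'.map Sum.inl) := by
      rw [← hl', FreeMonoid.ofList_toList]
    rw [sdeg, sdeg, mu_inX m hm, mu_inX m' hm', inv_one, one_mul, one_mul,
      hmeq, hmeq', lam_inX, lam_inX] at hsd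
    have hred := FreeGroup.reduce.sound hsd
    rw [reduce_pos, reduce_pos] at hred
    have : l = l' := by
      refine List.map_injective_iff.mpr ?_ hred
      intro a b hab
      simpa using hab
    rw [hmeq, hmeq', this]
  -- (ii)
  have part2 : ∀ α : FreeGroup (Fin n), ∀ a ∈ S 1, ∀ b ∈ S α, a * b ∈ S α := by
    intro α a ha b hb
    rw [hSTmem, hTmem] at ha hb ⊢
    intro c hc
    have hc' : c ∈ a.coeff.support * b.coeff.support := MonoidAlgebra.support_coeff_mul_subset a b hc
    obtain ⟨m₁, hm₁, m₂, hm₂, rfl⟩ := Finset.mem_mul.mp hc'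
    have h1 : sdeg n m₁ = 1 := ha m₁ hm₁
    have h2 : sdeg n m₂ = α := hb m₂ hm₂
    have h1' : lamHom n m₁ = muHom n m₁ := by
      rw [sdeg] at h1
      rw [← one_mul (lamHom n m₁), ← mul_inv_cancel (muHom n m₁), mul_assoc, h1, mul_one]
    show sdeg n (m₁ * m₂) = α
    rw [sdeg, map_mul, map_mul, mul_inv_rev, h1', ← h2, sdeg]
    group
  -- (i)
  have hint : DirectSum.IsInternal T := by
    rw [DirectSum.isInternal_submodule_iff_iSupIndep_and_iSup_eq_top]
    constructor
    · intro α
      refine Disjoint.mono_right ?_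
        (ma_disjoint_supported_supported
          (s := {m : FreeMonoid (XTTn n) | sdeg n m = α})
          (t := {m : FreeMonoid (XTTn n) | sdeg n m ≠ α}) ?_)
      · refine iSup_le fun β => iSup_le fun hβ => ?_
        exact MonoidAlgebra.supported_mono fun m hm => fun h => hβ (hm ▸ h)
      · exact Set.disjoint_left.mpr fun m h1 h2 => h2 h1
    · rw [eq_top_iff]
      intro f hf
      clear hf
      induction f using MonoidAlgebra.induction with
      | zero => exact zero_mem _
      | single_add m r f _ _ ih =>
        refine add_mem ?_ ih
        refine Submodule.mem_iSup_of_mem (sdeg n m) ?_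
        exact MonoidAlgebra.mem_supported.mpr ((Finsupp.mem_supported K _).mp
          (Finsupp.single_mem_supported K r
            (s := {m_1 : FreeMonoid (XTTn n) | sdeg n m_1 = sdeg n m}) rfl))
  have part1 : DirectSum.IsInternal S := transfer_internal S T hST hint
  refine ⟨part1, part2, part3, ?_⟩
  -- (iv)
  intro α m m' hm hm' hmS hmS'
  have hsupp : ∀ mm : FreeMonoid (XTTn n),
      mm ∈ (MonoidAlgebra.of K (FreeMonoid (XTTn n)) mm).coeff.support := fun mm => by
    rw [MonoidAlgebra.of_apply, MonoidAlgebra.coeff_single, Finsupp.support_single_ne_zero mm (one_ne_zero (α := K))]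
    exact Finset.mem_singleton_self mm
  have h1 : sdeg n m = α := by
    rw [hSTmem, hTmem] at hmS
    exact hmS m (hsupp m)
  have h2 : sdeg n m' = α := by
    rw [hSTmem, hTmem] at hmS'
    exact hmS' m' (hsupp m')
  exact part3 m m' hm hm' (h1.trans h2.symm)
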